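/- Let x ∈ [0,1]^m and y ∈ [0,1]^n be arbitrary fractional vectors, and extend f(x,y) = Σ_{i,j} q_{ij} x_i y_j + Σ_i c_i x_i + Σ_j d_j y_j. Define y* ∈ {0,1}^n by y*_j = 1 if d_j + Σ_i q_{ij} x_i > 0 and y*_j = 0 otherwise, and then x* ∈ {0,1}^m by x*_i = 1 if c_i + Σ_j q_{ij} y*_j > 0 and x*_i = 0 otherwise. Then f(x*, y*) ≥ f(x, y). -/

import Mathlib

open Finset

/-- The bipartite boolean quadratic objective f(x,y) = xᵀQy + c·x + d·y,
extended to real vectors. -/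
noncomputable def fobj (m n : ℕ) (Q : Fin m → Fin n → ℝ) (c : Fin m → ℝ) (d : Fin n → ℝ)
    (x : Fin m → ℝ) (y : Fin n → ℝ) : ℝ :=
  (∑ i, ∑ j, Q i j * x i * y j) + (∑ i, c i * x i) + (∑ j, d j * y j)

/-- A boolean vector viewed as a real 0-1 vector. -/
def bv {k : ℕ} (x : Fin k → Bool) : Fin k → ℝ := fun i => if x i then 1 else 0

/-- The average of f over all 2^(m+n) boolean pairs (x,y). -/
noncomputable def avgA (m n : ℕ) (Q : Fin m → Fin n → ℝ) (c : Fin m → ℝ) (d : Fin n → ℝ) : ℝ :=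
  (∑ x : Fin m → Bool, ∑ y : Fin n → Bool, fobj m n Q c d (bv x) (bv y)) / 2 ^ (m + n)

private lemma key (a t : ℝ) (ht : t ∈ Set.Icc (0 : ℝ) 1) (b : Bool) (hb : b = true ↔ 0 < a) :
    a * t ≤ a * (if b then 1 else 0) := by
  obtain ⟨ht0, ht1⟩ := ht
  cases b with
  | true =>
    have ha : 0 < a := hb.mp rfl
    simpa using mul_le_mul_of_nonneg_left ht1 ha.le
  | false =>
    have ha : a ≤ 0 := by
      by_contra h
      exact absurd (hb.mpr (lt_of_not_ge h)) (by simp)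
    simpa using mul_nonpos_of_nonpos_of_nonneg ha ht0

private lemma fobj_y (m n : ℕ) (Q : Fin m → Fin n → ℝ) (c : Fin m → ℝ) (d : Fin n → ℝ)
    (x : Fin m → ℝ) (y : Fin n → ℝ) :
    fobj m n Q c d x y = (∑ i, c i * x i) + ∑ j, (d j + ∑ i, Q i j * x i) * y j := by
  unfold fobj
  rw [Finset.sum_comm]
  simp only [add_mul, Finset.sum_add_distrib, Finset.sum_mul]
  ring

private lemma fobj_x (m n : ℕ) (Q : Fin m → Fin n → ℝ) (c : Fin m → ℝ) (d : Fin n → ℝ)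
    (x : Fin m → ℝ) (y : Fin n → ℝ) :
    fobj m n Q c d x y = (∑ j, d j * y j) + ∑ i, (c i + ∑ j, Q i j * y j) * x i := by
  unfold fobj
  simp only [add_mul, Finset.sum_add_distrib, Finset.sum_mul]
  rw [show (∑ i : Fin m, ∑ j : Fin n, Q i j * x i * y j)
      = ∑ i : Fin m, ∑ j : Fin n, Q i j * y j * x i from
    Finset.sum_congr rfl fun i _ => Finset.sum_congr rfl fun j _ => by ring]
  ring

theorem RyOx_rounding (m n : ℕ)
    (Q : Fin m → Fin n → ℝ) (c : Fin m → ℝ) (d : Fin n → ℝ)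
    (x : Fin m → ℝ) (y : Fin n → ℝ)
    (hx : ∀ i, x i ∈ Set.Icc (0 : ℝ) 1) (hy : ∀ j, y j ∈ Set.Icc (0 : ℝ) 1)
    (ystar : Fin n → Bool)
    (hys : ∀ j, ystar j = true ↔ 0 < d j + ∑ i, Q i j * x i)
    (xstar : Fin m → Bool)
    (hxs : ∀ i, xstar i = true ↔ 0 < c i + ∑ j, Q i j * bv ystar j) :
    fobj m n Q c d x y ≤ fobj m n Q c d (bv xstar) (bv ystar) := by
  have step1 : fobj m n Q c d x y ≤ fobj m n Q c d x (bv ystar) := by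
    rw [fobj_y, fobj_y]
    apply add_le_add_right
    apply Finset.sum_le_sum
    intro j _
    exact key _ _ (hy j) _ (hys j)
  have step2 : fobj m n Q c d x (bv ystar) ≤ fobj m n Q c d (bv xstar) (bv ystar) := by
    rw [fobj_x, fobj_x]
    apply add_le_add_right
    apply Finset.sum_le_sum
    intro i _
    exact key _ _ (hx i) _ (hxs i)
  exact step1.trans step2
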